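/- There exists a universal constant C > 0 such that for any two centered Gaussian distributions P = N(0, σ₁²) and Q = N(0, σ₂²) with σ₁, σ₂ > 0, the total variation distance satisfies ‖P - Q‖_TV ≤ C |σ₂²/σ₁² - 1|. -/

import Mathlib

set_option maxHeartbeats 1000000

open MeasureTheory ProbabilityTheory Real

private lemma myL1 (a b : ℝ) : |rexp (-a) - rexp (-b)| ≤ |a - b| * (rexp (-a) + rexp (-b)) := by
  wlog h : b ≤ a with H
  · rw [abs_sub_comm, abs_sub_comm a b, add_comm]
    exact H b a (le_of_not_ge h)
  have h1 : rexp (-a) ≤ rexp (-b) := exp_le_exp.2 (by linarith)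
  rw [abs_of_nonpos (by linarith), abs_of_nonneg (by linarith)]
  have key : 1 - rexp (-(a - b)) ≤ a - b := by
    nlinarith [add_one_le_exp (-(a-b))]
  have : rexp (-b) - rexp (-a) = rexp (-b) * (1 - rexp (-(a-b))) := by
    rw [mul_sub, mul_one, ← exp_add]; ring_nf
  nlinarith [exp_pos (-b), exp_pos (-a)]

private lemma myL2 (v x : ℝ) (hv : 0 < v) :
    x ^ 2 * rexp (-x^2 / (2*v)) ≤ 4*v * rexp (-x^2 / (2*(2*v))) := by
  have h1 : rexp (-x^2 / (2*v)) = rexp (-x^2/(2*(2*v))) * rexp (-x^2/(2*(2*v))) := by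
    rw [← exp_add]; ring_nf
  have h2 : x^2 * rexp (-x^2/(2*(2*v))) ≤ 4*v := by
    have h := add_one_le_exp (x^2/(4*v))
    have h3 : rexp (-x^2/(2*(2*v))) = (rexp (x^2/(4*v)))⁻¹ := by
      rw [← exp_neg]; ring_nf
    rw [h3, mul_inv_le_iff₀' (exp_pos _)]
    have hx : 4*v*(x^2/(4*v)) = x^2 := by field_simp
    nlinarith [mul_le_mul_of_nonneg_left h (by positivity : (0:ℝ) ≤ 4*v)]
  calc x ^ 2 * rexp (-x^2 / (2*v))
      = (x^2 * rexp (-x^2/(2*(2*v)))) * rexp (-x^2/(2*(2*v))) := by rw [h1]; ring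
    _ ≤ 4*v * rexp (-x^2/(2*(2*v))) := by
        have := exp_pos (-x^2/(2*(2*v))); nlinarith

private lemma myL3 (v : ℝ) (hv : 0 < v) :
    ∫ x : ℝ, rexp (-x^2 / (2*v)) = Real.sqrt (2*π*v) := by
  have h : ∀ x : ℝ, -x^2/(2*v) = -(1/(2*v)) * x^2 := fun x => by field_simp
  simp_rw [h]
  rw [integral_gaussian]
  congr 1
  field_simp

private lemma myL4 (v : ℝ) (hv : 0 < v) :
    Integrable (fun x : ℝ => rexp (-x^2 / (2*v))) := by
  have h : ∀ x : ℝ, -x^2/(2*v) = -(1/(2*v)) * x^2 := fun x => by field_simp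
  simp_rw [h]
  exact integrable_exp_neg_mul_sq (by positivity)

private lemma my_pdf (σ : ℝ) (x : ℝ) :
    gaussianPDFReal 0 ⟨σ^2, sq_nonneg σ⟩ x
      = (Real.sqrt (2*π*σ^2))⁻¹ * rexp (-x^2 / (2*σ^2)) := by
  simp [gaussianPDFReal]
  rfl

private lemma my_ptwise (σ₁ σ₂ : ℝ) (h1 : 0 < σ₁) (h2 : 0 < σ₂) (x : ℝ) :
    |gaussianPDFReal 0 ⟨σ₁^2, sq_nonneg σ₁⟩ x - gaussianPDFReal 0 ⟨σ₂^2, sq_nonneg σ₂⟩ x|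
      ≤ |(Real.sqrt (2*π*σ₁^2))⁻¹ - (Real.sqrt (2*π*σ₂^2))⁻¹| * rexp (-x^2/(2*σ₁^2))
        + (Real.sqrt (2*π*σ₂^2))⁻¹ * |1/(2*σ₁^2) - 1/(2*σ₂^2)| * (4*σ₁^2)
            * rexp (-x^2/(2*(2*σ₁^2)))
        + (Real.sqrt (2*π*σ₂^2))⁻¹ * |1/(2*σ₁^2) - 1/(2*σ₂^2)| * (4*σ₂^2)
            * rexp (-x^2/(2*(2*σ₂^2))) := by
  rw [my_pdf σ₁, my_pdf σ₂]
  set c₁ := (Real.sqrt (2*π*σ₁^2))⁻¹ with hc₁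
  set c₂ := (Real.sqrt (2*π*σ₂^2))⁻¹ with hc₂
  set E₁ := rexp (-x^2/(2*σ₁^2)) with hE₁
  set E₂ := rexp (-x^2/(2*σ₂^2)) with hE₂
  have hc₂0 : 0 ≤ c₂ := by positivity
  have key : |c₁ * E₁ - c₂ * E₂| ≤ |c₁ - c₂| * E₁ + c₂ * |E₁ - E₂| := by
    have : c₁ * E₁ - c₂ * E₂ = (c₁ - c₂) * E₁ + c₂ * (E₁ - E₂) := by ring
    rw [this]
    refine (abs_add_le _ _).trans ?_
    rw [abs_mul, abs_mul, abs_of_nonneg (le_of_lt (exp_pos _)), abs_of_nonneg hc₂0]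
  refine key.trans ?_
  have hE : |E₁ - E₂| ≤ |1/(2*σ₁^2) - 1/(2*σ₂^2)| * x^2 * (E₁ + E₂) := by
    have h1' : E₁ = rexp (-(x^2/(2*σ₁^2))) := by rw [hE₁]; ring_nf
    have h2' : E₂ = rexp (-(x^2/(2*σ₂^2))) := by rw [hE₂]; ring_nf
    rw [h1', h2']
    refine (myL1 _ _).trans ?_
    have : |x^2/(2*σ₁^2) - x^2/(2*σ₂^2)| = |1/(2*σ₁^2) - 1/(2*σ₂^2)| * x^2 := by
      rw [show x^2/(2*σ₁^2) - x^2/(2*σ₂^2) = (1/(2*σ₁^2) - 1/(2*σ₂^2)) * x^2 by ring,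
        abs_mul, abs_of_nonneg (sq_nonneg x)]
    rw [this]
  have hx1 := myL2 (σ₁^2) x (by positivity)
  have hx2 := myL2 (σ₂^2) x (by positivity)
  set D := |1/(2*σ₁^2) - 1/(2*σ₂^2)| with hD
  have hD0 : 0 ≤ D := abs_nonneg _
  have : c₂ * |E₁ - E₂| ≤ c₂ * D * (4*σ₁^2) * rexp (-x^2/(2*(2*σ₁^2)))
      + c₂ * D * (4*σ₂^2) * rexp (-x^2/(2*(2*σ₂^2))) := by
    calc c₂ * |E₁ - E₂| ≤ c₂ * (D * x^2 * (E₁ + E₂)) := mul_le_mul_of_nonneg_left hE hc₂0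
      _ = c₂ * D * (x^2 * E₁) + c₂ * D * (x^2 * E₂) := by ring
      _ ≤ _ := by
          have m1 : c₂ * D * (x^2 * E₁) ≤ c₂ * D * (4*σ₁^2 * rexp (-x^2/(2*(2*σ₁^2)))) :=
            mul_le_mul_of_nonneg_left hx1 (by positivity)
          have m2 : c₂ * D * (x^2 * E₂) ≤ c₂ * D * (4*σ₂^2 * rexp (-x^2/(2*(2*σ₂^2)))) :=
            mul_le_mul_of_nonneg_left hx2 (by positivity)
          calc c₂ * D * (x^2 * E₁) + c₂ * D * (x^2 * E₂)
              ≤ c₂ * D * (4*σ₁^2 * rexp (-x^2/(2*(2*σ₁^2))))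
                + c₂ * D * (4*σ₂^2 * rexp (-x^2/(2*(2*σ₂^2)))) := add_le_add m1 m2
            _ = _ := by ring
  linarith

private lemma my_arith (σ₁ σ₂ : ℝ) (h1 : 0 < σ₁) (h2 : 0 < σ₂) (h : σ₁^2 ≤ 2*σ₂^2) :
    |(Real.sqrt (2*π*σ₁^2))⁻¹ - (Real.sqrt (2*π*σ₂^2))⁻¹| * Real.sqrt (2*π*σ₁^2)
      + (Real.sqrt (2*π*σ₂^2))⁻¹ * |1/(2*σ₁^2) - 1/(2*σ₂^2)| * (4*σ₁^2)
          * Real.sqrt (2*π*(2*σ₁^2))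
      + (Real.sqrt (2*π*σ₂^2))⁻¹ * |1/(2*σ₁^2) - 1/(2*σ₂^2)| * (4*σ₂^2)
          * Real.sqrt (2*π*(2*σ₂^2))
      ≤ 20 * |σ₂^2/σ₁^2 - 1| := by
  have hπ : 0 < π := pi_pos
  set t := Real.sqrt (2*π) with htdef
  have ht2 : 2 ≤ t := by
    rw [show (2:ℝ) = Real.sqrt 4 by
      rw [show (4:ℝ) = 2^2 by norm_num, Real.sqrt_sq (by norm_num : (0:ℝ) ≤ 2)]]
    exact Real.sqrt_le_sqrt (by nlinarith [pi_gt_three])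
  have ht0 : 0 < t := by linarith
  have hs₁ : Real.sqrt (2*π*σ₁^2) = t * σ₁ := by
    rw [mul_assoc] at *
    rw [show 2*(π*σ₁^2) = (2*π)*σ₁^2 by ring, Real.sqrt_mul (by positivity), Real.sqrt_sq h1.le]
  have hs₂ : Real.sqrt (2*π*σ₂^2) = t * σ₂ := by
    rw [show 2*π*σ₂^2 = (2*π)*σ₂^2 by ring, Real.sqrt_mul (by positivity), Real.sqrt_sq h2.le]
  have hq₁ : Real.sqrt (2*π*(2*σ₁^2)) ≤ 4*σ₁ := by
    rw [show 4*σ₁ = Real.sqrt ((4*σ₁)^2) by rw [Real.sqrt_sq (by positivity)]]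
    exact Real.sqrt_le_sqrt (by nlinarith [pi_le_four, sq_nonneg σ₁])
  have hq₂ : Real.sqrt (2*π*(2*σ₂^2)) ≤ 4*σ₂ := by
    rw [show 4*σ₂ = Real.sqrt ((4*σ₂)^2) by rw [Real.sqrt_sq (by positivity)]]
    exact Real.sqrt_le_sqrt (by nlinarith [pi_le_four, sq_nonneg σ₂])
  set d := |σ₂ - σ₁| with hddef
  have hd0 : 0 ≤ d := abs_nonneg _
  have habs1 : |σ₂^2/σ₁^2 - 1| = d*(σ₁+σ₂)/σ₁^2 := by
    rw [show σ₂^2/σ₁^2 - 1 = ((σ₂-σ₁)*(σ₁+σ₂))/σ₁^2 by field_simp; ring, abs_div, abs_mul,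
      abs_of_pos (by positivity : (0:ℝ) < σ₁+σ₂), abs_of_pos (by positivity : (0:ℝ) < σ₁^2)]
  have habs2 : |1/(2*σ₁^2) - 1/(2*σ₂^2)| = d*(σ₁+σ₂)/(2*σ₁^2*σ₂^2) := by
    rw [show 1/(2*σ₁^2) - 1/(2*σ₂^2) = ((σ₂-σ₁)*(σ₁+σ₂))/(2*σ₁^2*σ₂^2) by field_simp; ring,
      abs_div, abs_mul, abs_of_pos (by positivity : (0:ℝ) < σ₁+σ₂),
      abs_of_pos (by positivity : (0:ℝ) < 2*σ₁^2*σ₂^2)]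
  have habs3 : |(Real.sqrt (2*π*σ₁^2))⁻¹ - (Real.sqrt (2*π*σ₂^2))⁻¹| = d/(t*σ₁*σ₂) := by
    rw [hs₁, hs₂, show (t*σ₁)⁻¹ - (t*σ₂)⁻¹ = (σ₂-σ₁)/(t*σ₁*σ₂) by field_simp, abs_div,
      abs_of_pos (by positivity : (0:ℝ) < t*σ₁*σ₂)]
  rw [habs1, habs2, habs3, hs₁, hs₂]
  have h15 : σ₁ ≤ 1.5*σ₂ := by nlinarith
  have step2 : (t*σ₂)⁻¹ * (d*(σ₁+σ₂)/(2*σ₁^2*σ₂^2)) * (4*σ₁^2) * Real.sqrt (2*π*(2*σ₁^2))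
      ≤ 4*d*(σ₁+σ₂)*σ₁/σ₂^3 := by
    have c0 : 0 ≤ (t*σ₂)⁻¹ * (d*(σ₁+σ₂)/(2*σ₁^2*σ₂^2)) * (4*σ₁^2) := by positivity
    refine (mul_le_mul_of_nonneg_left hq₁ c0).trans ?_
    have hle : (t*σ₂)⁻¹ ≤ (2*σ₂)⁻¹ := by
      apply inv_anti₀ (by positivity)
      nlinarith
    have : (t*σ₂)⁻¹ * (d*(σ₁+σ₂)/(2*σ₁^2*σ₂^2)) * (4*σ₁^2) * (4*σ₁)
        ≤ (2*σ₂)⁻¹ * (d*(σ₁+σ₂)/(2*σ₁^2*σ₂^2)) * (4*σ₁^2) * (4*σ₁) := by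
      rw [show (t*σ₂)⁻¹ * (d*(σ₁+σ₂)/(2*σ₁^2*σ₂^2)) * (4*σ₁^2) * (4*σ₁)
          = (t*σ₂)⁻¹ * ((d*(σ₁+σ₂)/(2*σ₁^2*σ₂^2)) * (4*σ₁^2) * (4*σ₁)) by ring,
        show (2*σ₂)⁻¹ * (d*(σ₁+σ₂)/(2*σ₁^2*σ₂^2)) * (4*σ₁^2) * (4*σ₁)
          = (2*σ₂)⁻¹ * ((d*(σ₁+σ₂)/(2*σ₁^2*σ₂^2)) * (4*σ₁^2) * (4*σ₁)) by ring]
      exact mul_le_mul_of_nonneg_right hle (by positivity)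
    refine this.trans (le_of_eq ?_)
    field_simp
    ring
  have step3 : (t*σ₂)⁻¹ * (d*(σ₁+σ₂)/(2*σ₁^2*σ₂^2)) * (4*σ₂^2) * Real.sqrt (2*π*(2*σ₂^2))
      ≤ 4*d*(σ₁+σ₂)/σ₁^2 := by
    have c0 : 0 ≤ (t*σ₂)⁻¹ * (d*(σ₁+σ₂)/(2*σ₁^2*σ₂^2)) * (4*σ₂^2) := by positivity
    refine (mul_le_mul_of_nonneg_left hq₂ c0).trans ?_
    have hle : (t*σ₂)⁻¹ ≤ (2*σ₂)⁻¹ := by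
      apply inv_anti₀ (by positivity)
      nlinarith
    have : (t*σ₂)⁻¹ * (d*(σ₁+σ₂)/(2*σ₁^2*σ₂^2)) * (4*σ₂^2) * (4*σ₂)
        ≤ (2*σ₂)⁻¹ * (d*(σ₁+σ₂)/(2*σ₁^2*σ₂^2)) * (4*σ₂^2) * (4*σ₂) := by
      rw [show (t*σ₂)⁻¹ * (d*(σ₁+σ₂)/(2*σ₁^2*σ₂^2)) * (4*σ₂^2) * (4*σ₂)
          = (t*σ₂)⁻¹ * ((d*(σ₁+σ₂)/(2*σ₁^2*σ₂^2)) * (4*σ₂^2) * (4*σ₂)) by ring,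
        show (2*σ₂)⁻¹ * (d*(σ₁+σ₂)/(2*σ₁^2*σ₂^2)) * (4*σ₂^2) * (4*σ₂)
          = (2*σ₂)⁻¹ * ((d*(σ₁+σ₂)/(2*σ₁^2*σ₂^2)) * (4*σ₂^2) * (4*σ₂)) by ring]
      exact mul_le_mul_of_nonneg_right hle (by positivity)
    refine this.trans (le_of_eq ?_)
    field_simp
    ring
  have step1 : d/(t*σ₁*σ₂) * (t*σ₁) = d/σ₂ := by field_simp
  rw [step1]
  have final : d/σ₂ + 4*d*(σ₁+σ₂)*σ₁/σ₂^3 + 4*d*(σ₁+σ₂)/σ₁^2 ≤ 20*(d*(σ₁+σ₂)/σ₁^2) := by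
    have hnum : 0 ≤ 20*d*(σ₁+σ₂)*σ₂^3 - d*σ₁^2*σ₂^2 - 4*d*(σ₁+σ₂)*σ₁^3 - 4*d*(σ₁+σ₂)*σ₂^3 := by
      have hcube : σ₁^3 ≤ 3.375*σ₂^3 := by nlinarith
      have hN : σ₁^2*σ₂^2 + 4*(σ₁+σ₂)*σ₁^3 ≤ 16*(σ₁+σ₂)*σ₂^3 := by
        nlinarith [mul_le_mul_of_nonneg_right hcube h1.le,
          mul_le_mul_of_nonneg_right hcube h2.le, sq_nonneg (σ₁-σ₂), sq_nonneg σ₂,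
          mul_pos h1 h2]
      nlinarith [mul_le_mul_of_nonneg_left hN hd0]
    have heq : 20*(d*(σ₁+σ₂)/σ₁^2) - (d/σ₂ + 4*d*(σ₁+σ₂)*σ₁/σ₂^3 + 4*d*(σ₁+σ₂)/σ₁^2)
        = (20*d*(σ₁+σ₂)*σ₂^3 - d*σ₁^2*σ₂^2 - 4*d*(σ₁+σ₂)*σ₁^3 - 4*d*(σ₁+σ₂)*σ₂^3)
          / (σ₁^2*σ₂^3) := by
      field_simp
      ring
    have := div_nonneg hnum (by positivity : (0:ℝ) ≤ σ₁^2*σ₂^3)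
    linarith [heq ▸ this]
  linarith [step2, step3, final]

private lemma my_intbound (σ₁ σ₂ : ℝ) (h1 : 0 < σ₁) (h2 : 0 < σ₂) (h : σ₁^2 ≤ 2*σ₂^2) :
    ∫ x : ℝ, |gaussianPDFReal 0 ⟨σ₁^2, sq_nonneg σ₁⟩ x
        - gaussianPDFReal 0 ⟨σ₂^2, sq_nonneg σ₂⟩ x|
      ≤ 20 * |σ₂^2/σ₁^2 - 1| := by
  set K₁ := |(Real.sqrt (2*π*σ₁^2))⁻¹ - (Real.sqrt (2*π*σ₂^2))⁻¹| with hK₁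
  set A := (Real.sqrt (2*π*σ₂^2))⁻¹ * |1/(2*σ₁^2) - 1/(2*σ₂^2)| * (4*σ₁^2) with hA
  set B := (Real.sqrt (2*π*σ₂^2))⁻¹ * |1/(2*σ₁^2) - 1/(2*σ₂^2)| * (4*σ₂^2) with hB
  have int1 : Integrable (fun x : ℝ => rexp (-x^2/(2*σ₁^2))) := myL4 _ (by positivity)
  have intF1 : Integrable (fun x : ℝ => rexp (-x^2/(2*(2*σ₁^2)))) := myL4 _ (by positivity)
  have intF2 : Integrable (fun x : ℝ => rexp (-x^2/(2*(2*σ₂^2)))) := myL4 _ (by positivity)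
  have intg : Integrable (fun x : ℝ => K₁ * rexp (-x^2/(2*σ₁^2))
      + A * rexp (-x^2/(2*(2*σ₁^2))) + B * rexp (-x^2/(2*(2*σ₂^2)))) :=
    ((int1.const_mul K₁).add (intF1.const_mul A)).add (intF2.const_mul B)
  have intpq : Integrable (fun x : ℝ => |gaussianPDFReal 0 ⟨σ₁^2, sq_nonneg σ₁⟩ x
      - gaussianPDFReal 0 ⟨σ₂^2, sq_nonneg σ₂⟩ x|) :=
    ((integrable_gaussianPDFReal _ _).sub (integrable_gaussianPDFReal _ _)).abs
  have hmono := integral_mono intpq intg (fun x => my_ptwise σ₁ σ₂ h1 h2 x)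
  refine hmono.trans ?_
  have hint : ∫ x : ℝ, (K₁ * rexp (-x^2/(2*σ₁^2))
      + A * rexp (-x^2/(2*(2*σ₁^2))) + B * rexp (-x^2/(2*(2*σ₂^2))))
      = K₁ * Real.sqrt (2*π*σ₁^2) + A * Real.sqrt (2*π*(2*σ₁^2))
        + B * Real.sqrt (2*π*(2*σ₂^2)) := by
    have int12 : Integrable (fun x : ℝ => K₁ * rexp (-x^2/(2*σ₁^2))
        + A * rexp (-x^2/(2*(2*σ₁^2)))) := (int1.const_mul K₁).add (intF1.const_mul A)
    have intK : Integrable (fun x : ℝ => K₁ * rexp (-x^2/(2*σ₁^2))) := int1.const_mul K₁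
    have intA : Integrable (fun x : ℝ => A * rexp (-x^2/(2*(2*σ₁^2)))) := intF1.const_mul A
    have intB : Integrable (fun x : ℝ => B * rexp (-x^2/(2*(2*σ₂^2)))) := intF2.const_mul B
    rw [integral_add int12 intB, integral_add intK intA,
      integral_const_mul, integral_const_mul, integral_const_mul,
      myL3 _ (by positivity : (0:ℝ) < σ₁^2), myL3 _ (by positivity : (0:ℝ) < 2*σ₁^2),
      myL3 _ (by positivity : (0:ℝ) < 2*σ₂^2)]
  rw [hint]
  exact my_arith σ₁ σ₂ h1 h2 h

private lemma my_vne (σ : ℝ) (hσ : 0 < σ) : (⟨σ^2, sq_nonneg σ⟩ : NNReal) ≠ 0 := by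
  intro hcon
  have := congrArg NNReal.toReal hcon
  change σ^2 = 0 at this
  nlinarith

private lemma my_set_bound (σ₁ σ₂ : ℝ) (h1 : 0 < σ₁) (h2 : 0 < σ₂)
    (t : Set ℝ) (ht : MeasurableSet t) :
    |(gaussianReal 0 ⟨σ₁^2, sq_nonneg σ₁⟩ t).toReal
        - (gaussianReal 0 ⟨σ₂^2, sq_nonneg σ₂⟩ t).toReal|
      ≤ ∫ x : ℝ, |gaussianPDFReal 0 ⟨σ₁^2, sq_nonneg σ₁⟩ x
          - gaussianPDFReal 0 ⟨σ₂^2, sq_nonneg σ₂⟩ x| := by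
  have intp := integrable_gaussianPDFReal 0 (⟨σ₁^2, sq_nonneg σ₁⟩ : NNReal)
  have intq := integrable_gaussianPDFReal 0 (⟨σ₂^2, sq_nonneg σ₂⟩ : NNReal)
  rw [gaussianReal_apply_eq_integral 0 (my_vne σ₁ h1) t,
    gaussianReal_apply_eq_integral 0 (my_vne σ₂ h2) t,
    ENNReal.toReal_ofReal (integral_nonneg (fun x => gaussianPDFReal_nonneg (0:ℝ) (⟨σ₁^2, sq_nonneg σ₁⟩ : NNReal) x)),
    ENNReal.toReal_ofReal (integral_nonneg (fun x => gaussianPDFReal_nonneg (0:ℝ) (⟨σ₂^2, sq_nonneg σ₂⟩ : NNReal) x)),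
    ← integral_sub intp.restrict intq.restrict]
  calc |∫ x in t, (gaussianPDFReal 0 ⟨σ₁^2, sq_nonneg σ₁⟩ x
          - gaussianPDFReal 0 ⟨σ₂^2, sq_nonneg σ₂⟩ x)|
      ≤ ∫ x in t, |gaussianPDFReal 0 ⟨σ₁^2, sq_nonneg σ₁⟩ x
          - gaussianPDFReal 0 ⟨σ₂^2, sq_nonneg σ₂⟩ x| := by
        simpa using norm_integral_le_integral_norm (μ := volume.restrict t)
          (f := fun x => gaussianPDFReal 0 ⟨σ₁^2, sq_nonneg σ₁⟩ x
            - gaussianPDFReal 0 ⟨σ₂^2, sq_nonneg σ₂⟩ x)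
    _ ≤ _ := setIntegral_le_integral (intp.sub intq).abs
        (ae_of_all _ (fun x => abs_nonneg _))

/-- Total variation distance between two measures on ℝ. -/
noncomputable def tvDist (P Q : Measure ℝ) : ℝ :=
  ⨆ s : Set ℝ, |(P s).toReal - (Q s).toReal|

/-- There is a universal constant `C > 0` such that for any two centered Gaussians,
`‖N(0,σ₁²) - N(0,σ₂²)‖_TV ≤ C |σ₂²/σ₁² - 1|`. -/
theorem tvDist_centered_gaussians_le :
    ∃ C > (0 : ℝ), ∀ σ₁ σ₂ : ℝ, 0 < σ₁ → 0 < σ₂ →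
      tvDist (gaussianReal 0 ⟨σ₁ ^ 2, sq_nonneg σ₁⟩) (gaussianReal 0 ⟨σ₂ ^ 2, sq_nonneg σ₂⟩)
        ≤ C * |σ₂ ^ 2 / σ₁ ^ 2 - 1| := by
  refine ⟨20, by norm_num, fun σ₁ σ₂ h1 h2 => ?_⟩
  set P := gaussianReal 0 ⟨σ₁ ^ 2, sq_nonneg σ₁⟩ with hP
  set Q := gaussianReal 0 ⟨σ₂ ^ 2, sq_nonneg σ₂⟩ with hQ
  haveI : IsProbabilityMeasure P := instIsProbabilityMeasureGaussianReal _ _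
  haveI : IsProbabilityMeasure Q := instIsProbabilityMeasureGaussianReal _ _
  have hBnd : (0:ℝ) ≤ 20 * |σ₂ ^ 2 / σ₁ ^ 2 - 1| := by positivity
  have hprob : ∀ (μ : Measure ℝ) [IsProbabilityMeasure μ] (s : Set ℝ),
      (μ s).toReal ≤ 1 := by
    intro μ _ s
    have h := ENNReal.toReal_mono (measure_ne_top μ Set.univ)
      (measure_mono (Set.subset_univ s))
    simpa using h
  have hmeas : ∀ t : Set ℝ, MeasurableSet t →
      |(P t).toReal - (Q t).toReal| ≤ 20 * |σ₂ ^ 2 / σ₁ ^ 2 - 1| := by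
    intro t ht
    by_cases hcase : σ₁^2 ≤ 2*σ₂^2
    · exact (my_set_bound σ₁ σ₂ h1 h2 t ht).trans (my_intbound σ₁ σ₂ h1 h2 hcase)
    · push_neg at hcase
      have hr : σ₂^2/σ₁^2 < 1/2 := by
        rw [div_lt_iff₀ (by positivity)]
        nlinarith
      have habs : (1:ℝ)/2 ≤ |σ₂^2/σ₁^2 - 1| := by
        rw [abs_of_neg (by linarith)]
        linarith
      have b1 := hprob P t
      have b2 := hprob Q t
      have b3 : (0:ℝ) ≤ (P t).toReal := ENNReal.toReal_nonneg
      have b4 : (0:ℝ) ≤ (Q t).toReal := ENNReal.toReal_nonneg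
      have : |(P t).toReal - (Q t).toReal| ≤ 1 := abs_sub_le_iff.2 ⟨by linarith, by linarith⟩
      linarith
  have hall : ∀ s : Set ℝ, |(P s).toReal - (Q s).toReal| ≤ 20 * |σ₂ ^ 2 / σ₁ ^ 2 - 1| := by
    intro s
    rw [abs_sub_le_iff]
    constructor
    · have hm1 : (P s).toReal ≤ (P (toMeasurable Q s)).toReal :=
        ENNReal.toReal_mono (measure_ne_top _ _) (measure_mono (subset_toMeasurable _ _))
      have hm2 : (Q (toMeasurable Q s)).toReal = (Q s).toReal := by
        rw [measure_toMeasurable]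
      have hb := abs_le.1 (hmeas _ (measurableSet_toMeasurable Q s))
      linarith [hb.2]
    · have hm1 : (Q s).toReal ≤ (Q (toMeasurable P s)).toReal :=
        ENNReal.toReal_mono (measure_ne_top _ _) (measure_mono (subset_toMeasurable _ _))
      have hm2 : (P (toMeasurable P s)).toReal = (P s).toReal := by
        rw [measure_toMeasurable]
      have hb := abs_le.1 (hmeas _ (measurableSet_toMeasurable P s))
      linarith [hb.1]
  exact Real.iSup_le hall hBnd
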